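/- Local C¹ regularity of the vorticity function: let ψ ∈ C³ on a planar domain, set ω = Δψ, and suppose {ψ, ω} = ∇^⊥ψ·∇ω = 0. Let q be a point with ∇ψ(q) ≠ 0 and ψ(q) = c. Then there exist δ₁, δ₂ > 0 and a C¹ function f on (c - δ₁, c + δ₂) such that ω = f(ψ) in a neighborhood of q; explicitly f(c') = Δψ(σ(g⁻¹(c'))) where σ is the gradient flow of ψ through q and g = ψ ∘ σ. -/

import Mathlib

open Set

section Aux

lemma expand2 (L : ℝ × ℝ →L[ℝ] ℝ) (v : ℝ × ℝ) :
    L v = v.1 * L (1, 0) + v.2 * L (0, 1) := by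
  have hv : v = v.1 • ((1:ℝ), (0:ℝ)) + v.2 • ((0:ℝ), (1:ℝ)) := by
    ext <;> simp
  rw [hv, map_add, map_smul, map_smul, smul_eq_mul, smul_eq_mul]
  simp

lemma clm_ne_zero_of (L : ℝ × ℝ →L[ℝ] ℝ) (h : L ≠ 0) :
    L (1, 0) ≠ 0 ∨ L (0, 1) ≠ 0 := by
  by_contra hcon
  push_neg at hcon
  apply h
  apply ContinuousLinearMap.ext
  intro v
  rw [expand2 L v, hcon.1, hcon.2]; simp

lemma alg_lemma (px py ox oy v₁ v₂ : ℝ) (hne : px ≠ 0 ∨ py ≠ 0)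
    (hbr : -py * ox + px * oy = 0) (hv : px * v₁ + py * v₂ = 0) :
    ox * v₁ + oy * v₂ = 0 := by
  by_cases hpx : px = 0
  · subst hpx
    have hpy : py ≠ 0 := hne.resolve_left (by simp)
    have h2 : v₂ = 0 := by
      have h0 : py * v₂ = 0 := by linarith
      rcases mul_eq_zero.mp h0 with h | h
      · exact absurd h hpy
      · exact h
    have h3 : ox = 0 := by
      have : -py * ox = 0 := by linarith [hbr]
      rcases mul_eq_zero.mp this with h | h
      · exact absurd (neg_eq_zero.mp h) hpy
      · exact h
    simp [h2, h3]
  · have key : px * (ox * v₁ + oy * v₂) = 0 := by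
      have h1 : px * v₁ = -(py * v₂) := by linarith
      have h2 : px * oy = py * ox := by linarith
      calc px * (ox * v₁ + oy * v₂) = ox * (px * v₁) + (px * oy) * v₂ := by ring
        _ = ox * (-(py * v₂)) + (py * ox) * v₂ := by rw [h1, h2]
        _ = 0 := by ring
    exact (mul_eq_zero.mp key).resolve_left hpx

noncomputable def rotEquiv (a₁ a₂ : ℝ) (h : a₁ ^ 2 + a₂ ^ 2 ≠ 0) : (ℝ × ℝ) ≃L[ℝ] (ℝ × ℝ) :=
  LinearEquiv.toContinuousLinearEquiv
  { toFun := fun v => (a₁ * v.1 + a₂ * v.2, -a₂ * v.1 + a₁ * v.2)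
    map_add' := by intro v w; ext <;> simp <;> ring
    map_smul' := by intro m v; ext <;> simp <;> ring
    invFun := fun w => ((a₁ * w.1 - a₂ * w.2) / (a₁ ^ 2 + a₂ ^ 2),
      (a₂ * w.1 + a₁ * w.2) / (a₁ ^ 2 + a₂ ^ 2))
    left_inv := by intro v; ext <;> (simp; field_simp; ring)
    right_inv := by intro w; ext <;> (simp; field_simp; ring) }

lemma rotEquiv_apply (a₁ a₂ : ℝ) (h : a₁ ^ 2 + a₂ ^ 2 ≠ 0) (v : ℝ × ℝ) :
    rotEquiv a₁ a₂ h v = (a₁ * v.1 + a₂ * v.2, -a₂ * v.1 + a₁ * v.2) := rfl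

lemma omega_contDiff (ψ ω : ℝ × ℝ → ℝ) (hψ : ContDiff ℝ 3 ψ)
    (hω : ∀ q : ℝ × ℝ, ω q =
      fderiv ℝ (fun r => fderiv ℝ ψ r (1, 0)) q (1, 0) +
        fderiv ℝ (fun r => fderiv ℝ ψ r (0, 1)) q (0, 1)) :
    ContDiff ℝ 1 ω := by
  have h1 : ContDiff ℝ 2 (fderiv ℝ ψ) := hψ.fderiv_right (by norm_num)
  have h2 : ContDiff ℝ 2 (fun r => fderiv ℝ ψ r (1, 0)) := h1.clm_apply contDiff_const
  have h2' : ContDiff ℝ 2 (fun r => fderiv ℝ ψ r (0, 1)) := h1.clm_apply contDiff_const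
  have h3 : ContDiff ℝ 1 (fun q => fderiv ℝ (fun r => fderiv ℝ ψ r (1, 0)) q (1, 0)) :=
    (h2.fderiv_right (by norm_num)).clm_apply contDiff_const
  have h3' : ContDiff ℝ 1 (fun q => fderiv ℝ (fun r => fderiv ℝ ψ r (0, 1)) q (0, 1)) :=
    (h2'.fderiv_right (by norm_num)).clm_apply contDiff_const
  have : ω = fun q => fderiv ℝ (fun r => fderiv ℝ ψ r (1, 0)) q (1, 0) +
      fderiv ℝ (fun r => fderiv ℝ ψ r (0, 1)) q (0, 1) := funext hω
  rw [this]
  exact h3.add h3'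

end Aux

set_option maxHeartbeats 3200000 in
theorem stmt13 (ψ ω : ℝ × ℝ → ℝ) (hψ : ContDiff ℝ 3 ψ)
    (hω : ∀ q : ℝ × ℝ, ω q =
      fderiv ℝ (fun r => fderiv ℝ ψ r (1, 0)) q (1, 0) +
        fderiv ℝ (fun r => fderiv ℝ ψ r (0, 1)) q (0, 1))
    (hcomm : ∀ q : ℝ × ℝ,
      -(fderiv ℝ ψ q (0, 1)) * fderiv ℝ ω q (1, 0) +
        fderiv ℝ ψ q (1, 0) * fderiv ℝ ω q (0, 1) = 0)
    (q₀ : ℝ × ℝ) (hgrad : fderiv ℝ ψ q₀ ≠ 0) (c : ℝ) (hc : ψ q₀ = c) :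
    ∃ δ₁ > (0:ℝ), ∃ δ₂ > (0:ℝ), ∃ f : ℝ → ℝ,
      ContDiffOn ℝ 1 f (Set.Ioo (c - δ₁) (c + δ₂)) ∧
      (∃ V ∈ nhds q₀, ∀ q ∈ V, ω q = f (ψ q)) ∧
      ∃ ε > (0:ℝ), ∃ σ : ℝ → ℝ × ℝ, σ 0 = q₀ ∧
        (∀ t ∈ Set.Ioo (-ε) ε,
          HasDerivAt σ (fderiv ℝ ψ (σ t) (1, 0), fderiv ℝ ψ (σ t) (0, 1)) t) ∧
        ∃ g : ℝ → ℝ, (∀ t ∈ Set.Ioo (-ε) ε, g (ψ (σ t)) = t) ∧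
          ∀ c' ∈ Set.Ioo (c - δ₁) (c + δ₂), f c' = ω (σ (g c')) := by
  classical
  have h13 : (1 : WithTop ℕ∞) ≤ 3 := by norm_num
  have h30 : (3 : WithTop ℕ∞) ≠ 0 := by norm_num
  have hψdiff : Differentiable ℝ ψ := hψ.differentiable (by norm_num)
  have hωC1 : ContDiff ℝ 1 ω := omega_contDiff ψ ω hψ hω
  have hωdiff : Differentiable ℝ ω := hωC1.differentiable (by norm_num)
  -- the gradient at q₀
  set a₁ := fderiv ℝ ψ q₀ (1, 0) with ha₁
  set a₂ := fderiv ℝ ψ q₀ (0, 1) with ha₂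
  have hne₀ : a₁ ≠ 0 ∨ a₂ ≠ 0 := clm_ne_zero_of _ hgrad
  have hr : a₁ ^ 2 + a₂ ^ 2 ≠ 0 := by
    rcases hne₀ with h | h <;> positivity
  -- the linear functional l and the map Φ
  set l : ℝ × ℝ →L[ℝ] ℝ :=
    a₁ • (ContinuousLinearMap.snd ℝ ℝ ℝ) - a₂ • (ContinuousLinearMap.fst ℝ ℝ ℝ) with hl
  have hlapp : ∀ v : ℝ × ℝ, l v = -a₂ * v.1 + a₁ * v.2 := by
    intro v; simp [hl]; ring
  set Φ : ℝ × ℝ → ℝ × ℝ := fun q => (ψ q, l q) with hΦ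
  have hΦcd : ContDiff ℝ 3 Φ := hψ.prodMk (l.contDiff)
  have hfdΦ : ∀ q, HasFDerivAt Φ ((fderiv ℝ ψ q).prod l) q := fun q =>
    ((hψdiff q).hasFDerivAt).prodMk l.hasFDerivAt
  have hΦ' : HasFDerivAt Φ (↑(rotEquiv a₁ a₂ hr) : (ℝ × ℝ) →L[ℝ] (ℝ × ℝ)) q₀ := by
    have heq : ((fderiv ℝ ψ q₀).prod l) = (↑(rotEquiv a₁ a₂ hr) : (ℝ × ℝ) →L[ℝ] (ℝ × ℝ)) := by
      apply ContinuousLinearMap.ext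
      intro v
      show (fderiv ℝ ψ q₀ v, l v) = _
      rw [ContinuousLinearEquiv.coe_coe, rotEquiv_apply, expand2 (fderiv ℝ ψ q₀) v, hlapp]
      simp only [Prod.mk.injEq]
      exact ⟨by rw [← ha₁, ← ha₂]; ring, trivial⟩
    exact heq ▸ hfdΦ q₀
  -- the local inverse Ψ
  set P := hΦcd.contDiffAt.toOpenPartialHomeomorph Φ hΦ' h30 with hP
  set Ψ := hΦcd.contDiffAt.localInverse hΦ' h30 with hΨ
  have hcoeP : ⇑P = Φ := rfl
  have hcoePsymm : ⇑P.symm = Ψ := rfl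
  have hq₀src : q₀ ∈ P.source :=
    hΦcd.contDiffAt.mem_toOpenPartialHomeomorph_source hΦ' h30
  have hΨq₀ : Ψ (Φ q₀) = q₀ := hΦcd.contDiffAt.localInverse_apply_image hΦ' h30
  have hΨcd : ContDiffAt ℝ 3 Ψ (Φ q₀) := hΦcd.contDiffAt.to_localInverse hΦ' h30
  -- a neighborhood on which Ψ is C³
  obtain ⟨u, hu, hΨu⟩ := hΨcd.contDiffOn le_rfl (by norm_num)
  set u' := interior u with hu'
  have hu'open : IsOpen u' := isOpen_interior
  have hΨu' : ContDiffOn ℝ 3 Ψ u' := hΨu.mono interior_subset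
  have hΦq₀u' : Φ q₀ ∈ u' := mem_interior_iff_mem_nhds.mpr hu
  -- the set where the gradient doesn't vanish
  set G := {q : ℝ × ℝ | fderiv ℝ ψ q ≠ 0} with hG
  have hGopen : IsOpen G := by
    have hcont : Continuous (fderiv ℝ ψ) := hψ.continuous_fderiv (by norm_num)
    have : G = (fderiv ℝ ψ) ⁻¹' ({0}ᶜ) := rfl
    rw [this]
    exact IsOpen.preimage hcont isOpen_compl_singleton
  have hq₀G : q₀ ∈ G := hgrad
  -- the open set N around Φ q₀
  have hΨcont : ContinuousOn Ψ P.target := hcoePsymm ▸ P.continuousOn_symm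
  have hNopen : IsOpen ((P.target ∩ Ψ ⁻¹' G) ∩ u') :=
    (hΨcont.isOpen_inter_preimage P.open_target hGopen).inter hu'open
  set N := (P.target ∩ Ψ ⁻¹' G) ∩ u' with hN
  have hΦq₀N : Φ q₀ ∈ N := by
    refine ⟨⟨?_, ?_⟩, hΦq₀u'⟩
    · exact hΦcd.contDiffAt.image_mem_toOpenPartialHomeomorph_target hΦ' h30
    · show Ψ (Φ q₀) ∈ G
      rw [hΨq₀]; exact hq₀G
  obtain ⟨ρ, hρ, hballN⟩ := Metric.isOpen_iff.mp hNopen _ hΦq₀N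
  -- the rectangle S
  set s₀ := l q₀ with hs₀
  have hΦq₀eq : Φ q₀ = (c, s₀) := by rw [hΦ]; simp [hc, hs₀]
  set S := Ioo (c - ρ) (c + ρ) ×ˢ Ioo (s₀ - ρ) (s₀ + ρ) with hS
  have hSball : S ⊆ Metric.ball (Φ q₀) ρ := by
    intro p hp
    rw [Metric.mem_ball, hΦq₀eq, Prod.dist_eq, Real.dist_eq, Real.dist_eq]
    obtain ⟨⟨h1, h2⟩, h3, h4⟩ := hp
    apply max_lt <;> rw [abs_sub_lt_iff] <;> constructor <;> linarith
  have hSN : S ⊆ N := hSball.trans hballN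
  have hSopen : IsOpen S := isOpen_Ioo.prod isOpen_Ioo
  have hcs₀S : (c, s₀) ∈ S := by
    simp only [hS, mem_prod, mem_Ioo]
    refine ⟨⟨?_, ?_⟩, ?_, ?_⟩ <;> linarith
  -- basic facts about points of S
  have hSfacts : ∀ p ∈ S, p ∈ P.target ∧ Ψ p ∈ G ∧ DifferentiableAt ℝ Ψ p := by
    intro p hp
    obtain ⟨⟨hpt, hpG⟩, hpu⟩ := hSN hp
    exact ⟨hpt, hpG,
      (hΨu'.contDiffAt (hu'open.mem_nhds hpu)).differentiableAt (by norm_num)⟩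
  -- the key derivative computation
  have hW : ∀ c' s : ℝ, (c', s) ∈ S → HasDerivAt (fun s' => ω (Ψ (c', s'))) 0 s := by
    intro c' s hp
    obtain ⟨hpt, hpG, hdΨ⟩ := hSfacts _ hp
    set p := ((c' : ℝ), (s : ℝ)) with hpdef
    -- Φ ∘ Ψ = id near p
    have hΦΨ : (Φ ∘ Ψ) =ᶠ[nhds p] id := by
      filter_upwards [P.open_target.mem_nhds hpt] with p' hp'
      show Φ (Ψ p') = p'
      exact P.right_inv hp'
    have hfd1 : fderiv ℝ (Φ ∘ Ψ) p = ContinuousLinearMap.id ℝ (ℝ × ℝ) := by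
      rw [hΦΨ.fderiv_eq, fderiv_id]
    have hfd2 : fderiv ℝ (Φ ∘ Ψ) p = (fderiv ℝ Φ (Ψ p)).comp (fderiv ℝ Ψ p) :=
      fderiv_comp p (hΦcd.differentiable (by norm_num) (Ψ p)) hdΨ
    set v := fderiv ℝ Ψ p (0, 1) with hv
    have hΦv : fderiv ℝ Φ (Ψ p) v = ((0 : ℝ), (1 : ℝ)) := by
      have := hfd2.symm.trans hfd1
      calc fderiv ℝ Φ (Ψ p) v = ((fderiv ℝ Φ (Ψ p)).comp (fderiv ℝ Ψ p)) (0, 1) := rfl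
        _ = ContinuousLinearMap.id ℝ (ℝ × ℝ) (0, 1) := by rw [this]
        _ = ((0 : ℝ), (1 : ℝ)) := rfl
    have hfdΦp : fderiv ℝ Φ (Ψ p) = (fderiv ℝ ψ (Ψ p)).prod l := (hfdΦ (Ψ p)).fderiv
    have hψv : fderiv ℝ ψ (Ψ p) v = 0 := by
      have h' := hΦv
      rw [hfdΦp] at h'
      have := congrArg Prod.fst h'
      simpa using this
    have hexp : fderiv ℝ ψ (Ψ p) (1, 0) * v.1 + fderiv ℝ ψ (Ψ p) (0, 1) * v.2 = 0 := by
      rw [expand2] at hψv; linear_combination hψv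
    have hωv : fderiv ℝ ω (Ψ p) v = 0 := by
      rw [expand2]
      have := alg_lemma (fderiv ℝ ψ (Ψ p) (1, 0)) (fderiv ℝ ψ (Ψ p) (0, 1))
        (fderiv ℝ ω (Ψ p) (1, 0)) (fderiv ℝ ω (Ψ p) (0, 1)) v.1 v.2
        (clm_ne_zero_of _ hpG) (hcomm (Ψ p)) hexp
      linear_combination this
    -- the chain rule
    have hγ : HasDerivAt (fun s' : ℝ => ((c' : ℝ), s')) ((0 : ℝ), (1 : ℝ)) s :=
      (hasDerivAt_const s c').prodMk (hasDerivAt_id s)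
    have h1 : HasDerivAt (fun s' => Ψ (c', s')) v s :=
      hdΨ.hasFDerivAt.comp_hasDerivAt s hγ
    have h2 : HasDerivAt (fun s' => ω (Ψ (c', s'))) (fderiv ℝ ω (Ψ p) v) s :=
      (hωdiff (Ψ p)).hasFDerivAt.comp_hasDerivAt s h1
    rwa [hωv] at h2
  -- constancy in the second variable
  have hconst : ∀ c' s : ℝ, (c', s) ∈ S → ω (Ψ (c', s)) = ω (Ψ (c', s₀)) := by
    intro c' s hp
    obtain ⟨hc', hs⟩ := hp
    have hs₀mem : s₀ ∈ Ioo (s₀ - ρ) (s₀ + ρ) := by constructor <;> linarith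
    set F₀ : ℝ → ℝ := fun s' => ω (Ψ (c', s')) with hF₀
    have hder : ∀ x ∈ Ioo (s₀ - ρ) (s₀ + ρ), HasDerivAt F₀ 0 x := fun x hx =>
      hW c' x ⟨hc', hx⟩
    rcases le_total s₀ s with hle | hle
    · have hsub : Icc s₀ s ⊆ Ioo (s₀ - ρ) (s₀ + ρ) := by
        intro x hx
        obtain ⟨hx1, hx2⟩ := hx
        obtain ⟨h1, h2⟩ := hs
        constructor <;> linarith
      have := constant_of_has_deriv_right_zero
        (fun x hx => (hder x (hsub hx)).continuousAt.continuousWithinAt)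
        (fun x hx => ((hder x (hsub (mem_Icc_of_Ico hx))).hasDerivWithinAt))
        s (right_mem_Icc.mpr hle)
      exact this
    · have hsub : Icc s s₀ ⊆ Ioo (s₀ - ρ) (s₀ + ρ) := by
        intro x hx
        obtain ⟨hx1, hx2⟩ := hx
        obtain ⟨h1, h2⟩ := hs
        constructor <;> linarith
      have := constant_of_has_deriv_right_zero
        (fun x hx => (hder x (hsub hx)).continuousAt.continuousWithinAt)
        (fun x hx => ((hder x (hsub (mem_Icc_of_Ico hx))).hasDerivWithinAt))
        s₀ (right_mem_Icc.mpr hle)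
      exact this.symm
  -- the function f
  set f : ℝ → ℝ := fun c' => ω (Ψ (c', s₀)) with hf
  -- the neighborhood V
  set V := P.source ∩ Φ ⁻¹' S with hV
  have hVopen : IsOpen V := P.open_source.inter (hSopen.preimage hΦcd.continuous)
  have hq₀V : q₀ ∈ V := ⟨hq₀src, by rw [mem_preimage, hΦq₀eq]; exact hcs₀S⟩
  have hVf : ∀ q ∈ V, ω q = f (ψ q) := by
    intro q hq
    obtain ⟨hqsrc, hqS⟩ := hq
    have hqS' : ((ψ q : ℝ), (l q : ℝ)) ∈ S := hqS
    have h1 : Ψ (Φ q) = q := P.left_inv hqsrc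
    calc ω q = ω (Ψ (ψ q, l q)) := (congrArg ω h1).symm
      _ = ω (Ψ (ψ q, s₀)) := hconst _ _ hqS'
      _ = f (ψ q) := rfl
  have hVG : ∀ q ∈ V, fderiv ℝ ψ q ≠ 0 := by
    intro q hq
    obtain ⟨hqsrc, hqS⟩ := hq
    have := (hSfacts _ hqS).2.1
    rwa [show Ψ (Φ q) = q from P.left_inv hqsrc] at this
  -- f is C¹ on Ioo (c - ρ) (c + ρ)
  have hfC : ContDiffOn ℝ 1 f (Ioo (c - ρ) (c + ρ)) := by
    have hmaps : MapsTo (fun c' : ℝ => ((c' : ℝ), s₀)) (Ioo (c - ρ) (c + ρ)) u' := by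
      intro c' hc'
      refine (hSN ?_).2
      simp only [hS, mem_prod, mem_Ioo] at hc' ⊢
      refine ⟨hc', ?_, ?_⟩ <;> linarith
    have hinner : ContDiffOn ℝ 1 (fun c' : ℝ => Ψ (c', s₀)) (Ioo (c - ρ) (c + ρ)) :=
      (hΨu'.of_le h13).comp ((contDiff_id.prodMk contDiff_const).contDiffOn) hmaps
    exact hωC1.comp_contDiffOn hinner
  -- the ODE
  set Fv : ℝ × ℝ → ℝ × ℝ := fun q => (fderiv ℝ ψ q (1, 0), fderiv ℝ ψ q (0, 1)) with hFv
  have hFC : ContDiff ℝ 1 Fv := by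
    have h1 : ContDiff ℝ 1 (fderiv ℝ ψ) := hψ.fderiv_right (by norm_num)
    exact (h1.clm_apply contDiff_const).prodMk (h1.clm_apply contDiff_const)
  obtain ⟨σ, hσ0, ε₀, hε₀, hσD⟩ :=
    (hFC.contDiffAt (x := q₀)).exists_forall_mem_closedBall_exists_eq_forall_mem_Ioo_hasDerivAt₀ (0 : ℝ)
  have hσD' : ∀ t ∈ Ioo (-ε₀) ε₀, HasDerivAt σ (Fv (σ t)) t := by
    intro t ht
    exact hσD t (by simpa using ht)
  -- shrink epsilon so that σ stays in V
  have hσcont : ContinuousAt σ 0 := (hσD' 0 ⟨by linarith, hε₀⟩).continuousAt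
  have hpre : σ ⁻¹' V ∈ nhds 0 := by
    apply hσcont.preimage_mem_nhds
    rw [hσ0]
    exact hVopen.mem_nhds hq₀V
  obtain ⟨ε₁, hε₁, hball₁⟩ := Metric.mem_nhds_iff.mp hpre
  set ε' := min ε₀ ε₁ / 2 with hε'def
  have hmin₀ : min ε₀ ε₁ ≤ ε₀ := min_le_left _ _
  have hmin₁ : min ε₀ ε₁ ≤ ε₁ := min_le_right _ _
  have hε' : 0 < ε' := half_pos (lt_min hε₀ hε₁)
  have hε'lt₀ : ε' < ε₀ := by rw [hε'def]; linarith
  have hε'lt₁ : ε' < ε₁ := by rw [hε'def]; linarith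
  have hsub : Ioo (-ε') ε' ⊆ Ioo (-ε₀) ε₀ := by
    intro t ht
    obtain ⟨h1, h2⟩ := ht
    constructor <;> linarith
  have hσV : ∀ t ∈ Ioo (-ε') ε', σ t ∈ V := by
    intro t ht
    apply hball₁
    rw [Metric.mem_ball, Real.dist_eq, sub_zero, abs_lt]
    obtain ⟨h1, h2⟩ := ht
    constructor <;> linarith
  have hσD'' : ∀ t ∈ Ioo (-ε') ε', HasDerivAt σ (Fv (σ t)) t := fun t ht =>
    hσD' t (hsub ht)
  -- ψ ∘ σ is strictly monotone
  have hh : ∀ t ∈ Ioo (-ε') ε',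
      HasDerivAt (fun t' => ψ (σ t')) (fderiv ℝ ψ (σ t) (Fv (σ t))) t := fun t ht =>
    (hψdiff (σ t)).hasFDerivAt.comp_hasDerivAt t (hσD'' t ht)
  have hpos : ∀ t ∈ Ioo (-ε') ε', 0 < fderiv ℝ ψ (σ t) (Fv (σ t)) := by
    intro t ht
    rw [expand2]
    have h1 : (Fv (σ t)).1 = fderiv ℝ ψ (σ t) (1, 0) := rfl
    have h2 : (Fv (σ t)).2 = fderiv ℝ ψ (σ t) (0, 1) := rfl
    rw [h1, h2]
    rcases clm_ne_zero_of _ (hVG _ (hσV t ht)) with h | h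
    · nlinarith [mul_self_nonneg (fderiv ℝ ψ (σ t) (0, 1)), mul_self_pos.mpr h]
    · nlinarith [mul_self_nonneg (fderiv ℝ ψ (σ t) (1, 0)), mul_self_pos.mpr h]
  have hcontψσ : ContinuousOn (fun t => ψ (σ t)) (Ioo (-ε') ε') := fun t ht =>
    (hh t ht).continuousAt.continuousWithinAt
  have hmono : StrictMonoOn (fun t => ψ (σ t)) (Ioo (-ε') ε') := by
    apply strictMonoOn_of_deriv_pos (convex_Ioo _ _) hcontψσ
    intro x hx
    rw [interior_Ioo] at hx
    rw [(hh x hx).deriv]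
    exact hpos x hx
  -- the inverse g
  set g := Function.invFunOn (fun t => ψ (σ t)) (Ioo (-ε') ε') with hg
  have hg1 : ∀ t ∈ Ioo (-ε') ε', g (ψ (σ t)) = t := fun t ht =>
    hmono.injOn.leftInvOn_invFunOn ht
  -- endpoints
  have h0mem : (0 : ℝ) ∈ Ioo (-ε') ε' := by constructor <;> linarith
  have hnegmem : -(ε' / 2) ∈ Ioo (-ε') ε' := by constructor <;> linarith
  have hposmem : ε' / 2 ∈ Ioo (-ε') ε' := by constructor <;> linarith
  set m₁ := ψ (σ (-(ε' / 2))) with hm₁def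
  set m₂ := ψ (σ (ε' / 2)) with hm₂def
  have hm₁ : m₁ < c := by
    have h := hmono hnegmem h0mem (by linarith)
    simp only at h
    rw [hσ0, hc] at h
    exact h
  have hm₂ : c < m₂ := by
    have h := hmono h0mem hposmem (by linarith)
    simp only at h
    rw [hσ0, hc] at h
    exact h
  -- deltas
  set δ₁ := min ρ (c - m₁) with hδ₁def
  set δ₂ := min ρ (m₂ - c) with hδ₂def
  have hδ₁ : 0 < δ₁ := lt_min hρ (by linarith)
  have hδ₂ : 0 < δ₂ := lt_min hρ (by linarith)
  have hIoosub : Ioo (c - δ₁) (c + δ₂) ⊆ Ioo (c - ρ) (c + ρ) := by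
    intro x hx
    obtain ⟨h1, h2⟩ := hx
    have l1 : δ₁ ≤ ρ := min_le_left _ _
    have l2 : δ₂ ≤ ρ := min_le_left _ _
    constructor <;> linarith
  have hIccsub : Icc (-(ε' / 2)) (ε' / 2) ⊆ Ioo (-ε') ε' := by
    intro x hx
    obtain ⟨h1, h2⟩ := hx
    constructor <;> linarith
  have hIVT : Icc m₁ m₂ ⊆ (fun t => ψ (σ t)) '' Icc (-(ε' / 2)) (ε' / 2) :=
    intermediate_value_Icc (by linarith) (hcontψσ.mono hIccsub)
  -- the final claim
  have hfinal : ∀ c' ∈ Ioo (c - δ₁) (c + δ₂), f c' = ω (σ (g c')) := by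
    intro c' hc'
    obtain ⟨h1, h2⟩ := hc'
    have hc'Icc : c' ∈ Icc m₁ m₂ := by
      have l1 : δ₁ ≤ c - m₁ := min_le_right _ _
      have l2 : δ₂ ≤ m₂ - c := min_le_right _ _
      constructor <;> linarith
    obtain ⟨t, htmem, hteq⟩ := hIVT hc'Icc
    have htIoo : t ∈ Ioo (-ε') ε' := hIccsub htmem
    have hex : ∃ a ∈ Ioo (-ε') ε', ψ (σ a) = c' := ⟨t, htIoo, hteq⟩
    have hge : ψ (σ (g c')) = c' := Function.invFunOn_eq hex
    have hgmem : g c' ∈ Ioo (-ε') ε' := Function.invFunOn_mem hex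
    have hfeq : ω (σ (g c')) = f (ψ (σ (g c'))) := hVf _ (hσV _ hgmem)
    rw [hfeq, hge]
  exact ⟨δ₁, hδ₁, δ₂, hδ₂, f, hfC.mono hIoosub, ⟨V, hVopen.mem_nhds hq₀V, hVf⟩,
    ε', hε', σ, hσ0, fun t ht => hσD'' t ht, g, hg1, hfinal⟩
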